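/- For all n ≥ 0, the number of noncrossing set partitions of [n+1] equals Σ_{i=0}^{n} binomial(n,i) · M_i, where M_i is the number of partitions of [i] with no enhanced 2-crossing (equivalently, C_2(n+1) = Σ binomial(n,i) E_2(i), relating Catalan numbers to Motzkin numbers). -/

import Mathlib

/-- `(a, b)` is an arc of the set partition `π`: `a < b` lie in a common block
with no element of that block strictly between them. -/
def IsArc {s : Finset ℕ} (π : Finpartition s) (a b : ℕ) : Prop :=
  a < b ∧ ∃ B ∈ π.parts, a ∈ B ∧ b ∈ B ∧ ∀ x ∈ B, ¬(a < x ∧ x < b)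

/-- Enhanced (possibly trivial) arc: a genuine arc, or a trivial arc at a singleton block. -/
def IsEArc {s : Finset ℕ} (π : Finpartition s) (a b : ℕ) : Prop :=
  IsArc π a b ∨ (a = b ∧ {a} ∈ π.parts)

/-- `π` has an enhanced `k`-crossing: `a₁ < ⋯ < a_k ≤ b₁ < ⋯ < b_k` with each
`(aᵢ, bᵢ)` a (possibly trivial) arc. -/
def EnhCross {s : Finset ℕ} (π : Finpartition s) (k : ℕ) : Prop :=
  ∃ a b : Fin k → ℕ, StrictMono a ∧ StrictMono b ∧
    (∀ i j, a i ≤ b j) ∧ ∀ i, IsEArc π (a i) (b i)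

/-- `π` has a classical `k`-crossing: `a₁ < ⋯ < a_k < b₁ < ⋯ < b_k` with each
`(aᵢ, bᵢ)` an arc. -/
def ClCross {s : Finset ℕ} (π : Finpartition s) (k : ℕ) : Prop :=
  ∃ a b : Fin k → ℕ, StrictMono a ∧ StrictMono b ∧
    (∀ i j, a i < b j) ∧ ∀ i, IsArc π (a i) (b i)

/-- `π` has an enhanced `k`-nesting: `a₁ < ⋯ < a_k ≤ b_k < ⋯ < b₁` with each
`(aᵢ, bᵢ)` a (possibly trivial) arc. -/
def EnhNest {s : Finset ℕ} (π : Finpartition s) (k : ℕ) : Prop :=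
  ∃ a b : Fin k → ℕ, StrictMono a ∧ StrictAnti b ∧
    (∀ i j, a i ≤ b j) ∧ ∀ i, IsEArc π (a i) (b i)

/-- `π` has a classical `k`-nesting: additionally `a_k < b_k`. -/
def ClNest {s : Finset ℕ} (π : Finpartition s) (k : ℕ) : Prop :=
  ∃ a b : Fin k → ℕ, StrictMono a ∧ StrictAnti b ∧
    (∀ i j, a i < b j) ∧ ∀ i, IsArc π (a i) (b i)

/-- `σ = π̂`: the arcs of `σ` are exactly `(v, w+1)` for arcs `(v, w)` of `π`
together with `(u, u+1)` for singleton blocks `{u}` of `π`. -/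
def HatRel {s t : Finset ℕ} (π : Finpartition s) (σ : Finpartition t) : Prop :=
  ∀ x y, IsArc σ x y ↔
    ((∃ v w, IsArc π v w ∧ x = v ∧ y = w + 1) ∨ ({x} ∈ π.parts ∧ y = x + 1))

namespace Stmt5


open Finset

noncomputable section
open scoped Classical

def Diag (m : ℕ) (A : Finset (ℕ × ℕ)) : Prop :=
  (∀ p ∈ A, 1 ≤ p.1 ∧ p.1 < p.2 ∧ p.2 ≤ m) ∧
  (∀ p ∈ A, ∀ q ∈ A, p.1 = q.1 → p = q) ∧
  (∀ p ∈ A, ∀ q ∈ A, p.2 = q.2 → p = q)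

def Cl2 (A : Finset (ℕ × ℕ)) : Prop :=
  ∃ p ∈ A, ∃ q ∈ A, p.1 < q.1 ∧ q.1 < p.2 ∧ p.2 < q.2

def NCset (m : ℕ) : Finset (Finset (ℕ × ℕ)) :=
  ((Icc 1 m ×ˢ Icc 1 m).powerset).filter (fun A => Diag m A ∧ ¬ Cl2 A)

def Nn (m : ℕ) : ℕ := (NCset m).card

lemma mem_NCset {m A} : A ∈ NCset m ↔ Diag m A ∧ ¬ Cl2 A := by
  constructor
  · intro h; exact (mem_filter.1 h).2
  · intro h; refine mem_filter.2 ⟨mem_powerset.2 ?_, h⟩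
    intro p hp
    have := h.1.1 p hp
    cases p
    simp only [mem_product, mem_Icc]
    omega

def sh (c : ℕ) (A : Finset (ℕ × ℕ)) : Finset (ℕ × ℕ) :=
  A.image (fun p => (p.1 + c, p.2 + c))

lemma mem_sh {c : ℕ} {A} {p : ℕ × ℕ} :
    p ∈ sh c A ↔ ∃ q ∈ A, p.1 = q.1 + c ∧ p.2 = q.2 + c := by
  simp [sh, Prod.ext_iff, eq_comm]

lemma sh_mem_sh {c : ℕ} {A} {q : ℕ × ℕ} (hq : q ∈ A) :
    (q.1 + c, q.2 + c) ∈ sh c A := mem_sh.2 ⟨q, hq, rfl, rfl⟩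

lemma sh_inj {c : ℕ} {A B} (h : sh c A = sh c B) : A = B := by
  ext q
  constructor
  · intro hq
    have := h ▸ sh_mem_sh (c := c) hq
    rcases mem_sh.1 this with ⟨r, hr, h1, h2⟩
    have : q = r := by cases q; cases r; simp_all
    exact this ▸ hr
  · intro hq
    have := h.symm ▸ sh_mem_sh (c := c) hq
    rcases mem_sh.1 this with ⟨r, hr, h1, h2⟩
    have : q = r := by cases q; cases r; simp_all
    exact this ▸ hr

def unsh (c : ℕ) (A : Finset (ℕ × ℕ)) : Finset (ℕ × ℕ) :=
  A.image (fun p => (p.1 - c, p.2 - c))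

lemma mem_unsh {c : ℕ} {A} {q : ℕ × ℕ} :
    q ∈ unsh c A ↔ ∃ p ∈ A, q = (p.1 - c, p.2 - c) := by
  simp [unsh, eq_comm]

lemma sh_unsh {c : ℕ} {A} (h : ∀ p ∈ A, c ≤ p.1 ∧ c ≤ p.2) :
    sh c (unsh c A) = A := by
  rw [sh, unsh, image_image]
  rw [show A = A.image id from (image_id).symm]
  rw [image_image]
  apply image_congr
  intro p hp
  have := h p hp
  simp only [Function.comp_apply, id_eq]
  cases p; simp_all

lemma unsh_mem_NCset {M w c : ℕ} {B B' : Finset (ℕ × ℕ)} (hB : B ∈ NCset M) (hsub : B' ⊆ B)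
    (hrange : ∀ p ∈ B', c + 1 ≤ p.1 ∧ p.2 ≤ c + w) : unsh c B' ∈ NCset w := by
  obtain ⟨⟨hb, hl, hr⟩, hnc⟩ := mem_NCset.1 hB
  refine mem_NCset.2 ⟨⟨?_, ?_, ?_⟩, ?_⟩
  · intro q hq
    rcases mem_unsh.1 hq with ⟨p, hp, rfl⟩
    have h1 := hrange p hp
    have h2 := hb p (hsub hp)
    simp only
    omega
  · intro q hq q' hq' he
    rcases mem_unsh.1 hq with ⟨p, hp, rfl⟩
    rcases mem_unsh.1 hq' with ⟨p', hp', rfl⟩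
    have h1 := hrange p hp
    have h1' := hrange p' hp'
    have : p = p' := hl p (hsub hp) p' (hsub hp') (by simp only at he ⊢; omega)
    rw [this]
  · intro q hq q' hq' he
    rcases mem_unsh.1 hq with ⟨p, hp, rfl⟩
    rcases mem_unsh.1 hq' with ⟨p', hp', rfl⟩
    have h1 := hrange p hp
    have h1' := hrange p' hp'
    have h2 := hb p (hsub hp)
    have h2' := hb p' (hsub hp')
    have : p = p' := hr p (hsub hp) p' (hsub hp') (by simp only at he ⊢; omega)
    rw [this]
  · rintro ⟨q, hq, q', hq', c1, c2, c3⟩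
    rcases mem_unsh.1 hq with ⟨p, hp, rfl⟩
    rcases mem_unsh.1 hq' with ⟨p', hp', rfl⟩
    have h1 := hrange p hp
    have h1' := hrange p' hp'
    have h2 := hb p (hsub hp)
    have h2' := hb p' (hsub hp')
    simp only at c1 c2 c3
    exact hnc ⟨p, hsub hp, p', hsub hp', by omega, by omega, by omega⟩

/-- assembly map for the Catalan recurrence -/
def asmN (k : ℕ) (A1 A2 : Finset (ℕ × ℕ)) : Finset (ℕ × ℕ) :=
  insert (1, k+2) (sh 1 A1 ∪ sh (k+1) A2)

lemma mem_asmN {k A1 A2} {p : ℕ × ℕ} :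
    p ∈ asmN k A1 A2 ↔ (p.1 = 1 ∧ p.2 = k+2) ∨ (∃ q ∈ A1, p.1 = q.1 + 1 ∧ p.2 = q.2 + 1) ∨
      (∃ q ∈ A2, p.1 = q.1 + (k+1) ∧ p.2 = q.2 + (k+1)) := by
  simp [asmN, mem_sh, Prod.ext_iff]

lemma asmN_mem {m k : ℕ} (hk : k < m) {A1 A2} (h1 : A1 ∈ NCset k) (h2 : A2 ∈ NCset (m-k)) :
    asmN k A1 A2 ∈ NCset (m+1) := by
  obtain ⟨⟨b1, l1, r1⟩, nc1⟩ := mem_NCset.1 h1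
  obtain ⟨⟨b2, l2, r2⟩, nc2⟩ := mem_NCset.1 h2
  refine mem_NCset.2 ⟨⟨?_, ?_, ?_⟩, ?_⟩
  · intro p hp
    rcases mem_asmN.1 hp with ⟨e1, e2⟩ | ⟨q, hq, e1, e2⟩ | ⟨q, hq, e1, e2⟩
    · omega
    · have := b1 q hq; omega
    · have := b2 q hq; omega
  · intro p hp p' hp' he
    rcases mem_asmN.1 hp with ⟨e1, e2⟩ | ⟨q, hq, e1, e2⟩ | ⟨q, hq, e1, e2⟩ <;>
      rcases mem_asmN.1 hp' with ⟨e1', e2'⟩ | ⟨q', hq', e1', e2'⟩ | ⟨q', hq', e1', e2'⟩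
    · exact Prod.ext (by omega) (by omega)
    · have := b1 q' hq'; omega
    · have := b2 q' hq'; omega
    · have := b1 q hq; omega
    · have hb := b1 q hq; have hb' := b1 q' hq'
      have hqq : q = q' := l1 q hq q' hq' (by omega)
      exact Prod.ext (by omega) (by rw [hqq] at e2; omega)
    · have := b1 q hq; have := b2 q' hq'; omega
    · have := b2 q hq; omega
    · have := b2 q hq; have := b1 q' hq'; omega
    · have hb := b2 q hq; have hb' := b2 q' hq'
      have hqq : q = q' := l2 q hq q' hq' (by omega)
      exact Prod.ext (by omega) (by rw [hqq] at e2; omega)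
  · intro p hp p' hp' he
    rcases mem_asmN.1 hp with ⟨e1, e2⟩ | ⟨q, hq, e1, e2⟩ | ⟨q, hq, e1, e2⟩ <;>
      rcases mem_asmN.1 hp' with ⟨e1', e2'⟩ | ⟨q', hq', e1', e2'⟩ | ⟨q', hq', e1', e2'⟩
    · exact Prod.ext (by omega) (by omega)
    · have := b1 q' hq'; omega
    · have := b2 q' hq'; omega
    · have := b1 q hq; omega
    · have hb := b1 q hq; have hb' := b1 q' hq'
      have hqq : q = q' := r1 q hq q' hq' (by omega)
      exact Prod.ext (by rw [hqq] at e1; omega) (by omega)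
    · have := b1 q hq; have := b2 q' hq'; omega
    · have := b2 q hq; omega
    · have := b2 q hq; have := b1 q' hq'; omega
    · have hb := b2 q hq; have hb' := b2 q' hq'
      have hqq : q = q' := r2 q hq q' hq' (by omega)
      exact Prod.ext (by rw [hqq] at e1; omega) (by omega)
  · rintro ⟨p, hp, p', hp', c1, c2, c3⟩
    rcases mem_asmN.1 hp with ⟨e1, e2⟩ | ⟨q, hq, e1, e2⟩ | ⟨q, hq, e1, e2⟩ <;>
      rcases mem_asmN.1 hp' with ⟨e1', e2'⟩ | ⟨q', hq', e1', e2'⟩ | ⟨q', hq', e1', e2'⟩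
    · omega
    · have := b1 q' hq'; omega
    · have := b2 q' hq'; omega
    · have := b1 q hq; omega
    · have hb := b1 q hq; have hb' := b1 q' hq'
      exact nc1 ⟨q, hq, q', hq', by omega, by omega, by omega⟩
    · have := b1 q hq; have := b2 q' hq'; omega
    · have := b2 q hq; omega
    · have := b2 q hq; have := b1 q' hq'; omega
    · have hb := b2 q hq; have hb' := b2 q' hq'
      exact nc2 ⟨q, hq, q', hq', by omega, by omega, by omega⟩


lemma sh1_mem {m : ℕ} {A} (h : A ∈ NCset m) : sh 1 A ∈ NCset (m+1) := by
  obtain ⟨⟨hb, hl, hr⟩, hnc⟩ := mem_NCset.1 h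
  refine mem_NCset.2 ⟨⟨?_, ?_, ?_⟩, ?_⟩
  · intro p hp
    rcases mem_sh.1 hp with ⟨q, hq, e1, e2⟩
    have := hb q hq; omega
  · intro p hp p' hp' he
    rcases mem_sh.1 hp with ⟨q, hq, e1, e2⟩
    rcases mem_sh.1 hp' with ⟨q', hq', e1', e2'⟩
    have hqq : q = q' := hl q hq q' hq' (by omega)
    exact Prod.ext (by omega) (by rw [hqq] at e2; omega)
  · intro p hp p' hp' he
    rcases mem_sh.1 hp with ⟨q, hq, e1, e2⟩
    rcases mem_sh.1 hp' with ⟨q', hq', e1', e2'⟩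
    have hqq : q = q' := hr q hq q' hq' (by omega)
    exact Prod.ext (by rw [hqq] at e1; omega) (by omega)
  · rintro ⟨p, hp, p', hp', c1, c2, c3⟩
    rcases mem_sh.1 hp with ⟨q, hq, e1, e2⟩
    rcases mem_sh.1 hp' with ⟨q', hq', e1', e2'⟩
    exact hnc ⟨q, hq, q', hq', by omega, by omega, by omega⟩

lemma NCset_succ (m : ℕ) :
    NCset (m+1) = (NCset m).image (sh 1) ∪
      (range m).biUnion (fun k =>
        ((NCset k ×ˢ NCset (m-k))).image (fun AB => asmN k AB.1 AB.2)) := by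
  ext B
  constructor
  · intro hB
    obtain ⟨⟨hb, hl, hr⟩, hnc⟩ := mem_NCset.1 hB
    by_cases h1 : ∃ b, (1, b) ∈ B
    · obtain ⟨b, hbB⟩ := h1
      have hbnd := hb _ hbB
      simp only at hbnd
      have straddle : ∀ p ∈ B, (p.1 = 1 ∧ p.2 = b) ∨ (2 ≤ p.1 ∧ p.2 + 1 ≤ b) ∨ (b ≤ p.1) := by
        intro p hp
        have hpb := hb p hp
        by_cases hc1 : p.1 = 1
        · have hpe : p = (1, b) := hl p hp (1, b) hbB hc1
          exact Or.inl ⟨hc1, (congrArg Prod.snd hpe : p.2 = b)⟩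
        · by_cases hc2 : b ≤ p.1
          · exact Or.inr (Or.inr hc2)
          · by_cases hc3 : p.2 = b
            · have hpe : p = (1, b) := hr p hp (1, b) hbB hc3
              have : p.1 = 1 := congrArg Prod.fst hpe
              omega
            · rcases Nat.lt_or_ge p.2 b with hlt | hge
              · exact Or.inr (Or.inl (by omega))
              · exact absurd ⟨(1, b), hbB, p, hp, by show 1 < p.1; omega,
                  by show p.1 < b; omega, by show b < p.2; omega⟩ hnc
      set k := b - 2 with hkdef
      set A1 := unsh 1 (B.filter (fun p => 2 ≤ p.1 ∧ p.2 + 1 ≤ b)) with hA1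
      set A2 := unsh (b-1) (B.filter (fun p => b ≤ p.1)) with hA2
      have hA1m : A1 ∈ NCset k := by
        apply unsh_mem_NCset hB (filter_subset _ _)
        intro p hp
        rcases mem_filter.1 hp with ⟨hpB, h2, h3⟩
        omega
      have hA2m : A2 ∈ NCset (m - k) := by
        apply unsh_mem_NCset hB (filter_subset _ _)
        intro p hp
        rcases mem_filter.1 hp with ⟨hpB, h2⟩
        have := hb p hpB
        omega
      have hBeq : B = asmN k A1 A2 := by
        ext p
        constructor
        · intro hp
          have hpb := hb p hp
          rcases straddle p hp with ⟨e1, e2⟩ | ⟨e1, e2⟩ | e1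
          · exact mem_asmN.2 (Or.inl ⟨e1, by omega⟩)
          · refine mem_asmN.2 (Or.inr (Or.inl ⟨(p.1 - 1, p.2 - 1), ?_, ?_, ?_⟩))
            · exact mem_unsh.2 ⟨p, mem_filter.2 ⟨hp, e1, e2⟩, rfl⟩
            · show p.1 = p.1 - 1 + 1; omega
            · show p.2 = p.2 - 1 + 1; omega
          · refine mem_asmN.2 (Or.inr (Or.inr ⟨(p.1 - (b-1), p.2 - (b-1)), ?_, ?_, ?_⟩))
            · exact mem_unsh.2 ⟨p, mem_filter.2 ⟨hp, e1⟩, rfl⟩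
            · show p.1 = p.1 - (b-1) + (k+1); omega
            · show p.2 = p.2 - (b-1) + (k+1); omega
        · intro hp
          rcases mem_asmN.1 hp with ⟨e1, e2⟩ | ⟨q, hq, e1, e2⟩ | ⟨q, hq, e1, e2⟩
          · have : p = (1, b) := Prod.ext (e1 : p.1 = 1) (by show p.2 = b; omega)
            rw [this]; exact hbB
          · rcases mem_unsh.1 hq with ⟨p', hp', hqe⟩
            rcases mem_filter.1 hp' with ⟨hp'B, h2, h3⟩
            have hb' := hb p' hp'B
            have hq1 : q.1 = p'.1 - 1 := congrArg Prod.fst hqe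
            have hq2 : q.2 = p'.2 - 1 := congrArg Prod.snd hqe
            have : p = p' := Prod.ext (by omega) (by omega)
            rw [this]; exact hp'B
          · rcases mem_unsh.1 hq with ⟨p', hp', hqe⟩
            rcases mem_filter.1 hp' with ⟨hp'B, h2⟩
            have hb' := hb p' hp'B
            have hq1 : q.1 = p'.1 - (b-1) := congrArg Prod.fst hqe
            have hq2 : q.2 = p'.2 - (b-1) := congrArg Prod.snd hqe
            have : p = p' := Prod.ext (by omega) (by omega)
            rw [this]; exact hp'B
      refine mem_union_right _ (mem_biUnion.2 ⟨k, mem_range.2 (by omega), ?_⟩)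
      exact mem_image.2 ⟨(A1, A2), mem_product.2 ⟨hA1m, hA2m⟩, hBeq.symm⟩
    · refine mem_union_left _ (mem_image.2 ⟨unsh 1 B, ?_, ?_⟩)
      · apply unsh_mem_NCset hB (subset_refl _)
        intro p hp
        have := hb p hp
        refine ⟨?_, by omega⟩
        rcases Nat.lt_or_ge p.1 2 with hlt | hge
        · exact absurd ⟨p.2, by rwa [show (1, p.2) = p from Prod.ext (by omega) rfl]⟩ h1
        · omega
      · rw [sh_unsh]
        intro p hp
        have := hb p hp
        omega
  · intro hB
    rcases mem_union.1 hB with h | h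
    · rcases mem_image.1 h with ⟨A, hA, rfl⟩
      exact sh1_mem hA
    · rcases mem_biUnion.1 h with ⟨k, hk, h2⟩
      rcases mem_image.1 h2 with ⟨AB, hAB, rfl⟩
      have := mem_product.1 hAB
      exact asmN_mem (mem_range.1 hk) this.1 this.2

lemma one_not_fst_sh1 {m : ℕ} {A} (hA : A ∈ NCset m) {x : ℕ} : (1, x) ∉ sh 1 A := by
  intro hx
  rcases mem_sh.1 hx with ⟨q, hq, e1, e2⟩
  have := (mem_NCset.1 hA).1.1 q hq
  omega

lemma one_mem_asmN {k A1 A2} : (1, k+2) ∈ asmN k A1 A2 :=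
  mem_asmN.2 (Or.inl ⟨rfl, rfl⟩)

lemma asmN_fst_one {k A1 A2 x} (h1 : A1 ∈ NCset k) (h2 : A2 ∈ NCset w)
    (hx : (1, x) ∈ asmN k A1 A2) : x = k + 2 := by
  rcases mem_asmN.1 hx with ⟨e1, e2⟩ | ⟨q, hq, e1, e2⟩ | ⟨q, hq, e1, e2⟩
  · exact e2
  · have := (mem_NCset.1 h1).1.1 q hq; simp at e1; omega
  · have := (mem_NCset.1 h2).1.1 q hq; simp at e1; omega

lemma sh1_A1_filter {m k : ℕ} {A1 A2} (h1 : A1 ∈ NCset k) (h2 : A2 ∈ NCset (m-k)) :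
    sh 1 A1 = (asmN k A1 A2).filter (fun p => p.2 ≤ k + 1) := by
  obtain ⟨⟨b1, -, -⟩, -⟩ := mem_NCset.1 h1
  obtain ⟨⟨b2, -, -⟩, -⟩ := mem_NCset.1 h2
  ext p
  constructor
  · intro hp
    rcases mem_sh.1 hp with ⟨q, hq, e1, e2⟩
    have := b1 q hq
    refine mem_filter.2 ⟨mem_asmN.2 (Or.inr (Or.inl ⟨q, hq, e1, e2⟩)), by omega⟩
  · intro hp
    rcases mem_filter.1 hp with ⟨hp1, hp2⟩
    rcases mem_asmN.1 hp1 with ⟨e1, e2⟩ | ⟨q, hq, e1, e2⟩ | ⟨q, hq, e1, e2⟩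
    · omega
    · exact mem_sh.2 ⟨q, hq, e1, e2⟩
    · have := b2 q hq; omega

lemma sh_A2_filter {m k : ℕ} {A1 A2} (h1 : A1 ∈ NCset k) (h2 : A2 ∈ NCset (m-k)) :
    sh (k+1) A2 = (asmN k A1 A2).filter (fun p => k + 2 ≤ p.1) := by
  obtain ⟨⟨b1, -, -⟩, -⟩ := mem_NCset.1 h1
  obtain ⟨⟨b2, -, -⟩, -⟩ := mem_NCset.1 h2
  ext p
  constructor
  · intro hp
    rcases mem_sh.1 hp with ⟨q, hq, e1, e2⟩
    have := b2 q hq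
    refine mem_filter.2 ⟨mem_asmN.2 (Or.inr (Or.inr ⟨q, hq, e1, e2⟩)), by omega⟩
  · intro hp
    rcases mem_filter.1 hp with ⟨hp1, hp2⟩
    rcases mem_asmN.1 hp1 with ⟨e1, e2⟩ | ⟨q, hq, e1, e2⟩ | ⟨q, hq, e1, e2⟩
    · omega
    · have := b1 q hq; omega
    · exact mem_sh.2 ⟨q, hq, e1, e2⟩

lemma Nn_rec (m : ℕ) : Nn (m+1) = Nn m + ∑ k ∈ range m, Nn k * Nn (m-k) := by
  rw [Nn, NCset_succ m]
  rw [card_union_of_disjoint]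
  · congr 1
    · rw [card_image_of_injOn (fun A _ B _ h => sh_inj h)]; rfl
    · rw [card_biUnion]
      · refine sum_congr rfl (fun k hk => ?_)
        rw [card_image_of_injOn, card_product]
        · rfl
        rintro ⟨A1, A2⟩ hAB ⟨A1', A2'⟩ hAB' he
        rcases mem_coe.1 hAB with hAB
        rcases mem_coe.1 hAB' with hAB'
        have h1 := (mem_product.1 hAB).1
        have h2 := (mem_product.1 hAB).2
        have h1' := (mem_product.1 hAB').1
        have h2' := (mem_product.1 hAB').2
        simp only at he
        have e1 : A1 = A1' := by
          apply sh_inj (c := 1)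
          rw [sh1_A1_filter h1 h2, sh1_A1_filter h1' h2', he]
        have e2 : A2 = A2' := by
          apply sh_inj (c := k+1)
          rw [sh_A2_filter h1 h2, sh_A2_filter h1' h2', he]
        rw [e1, e2]
      · intro k hk k' hk' hne
        simp only [disjoint_left]
        intro B hB hB'
        rcases mem_image.1 hB with ⟨⟨A1, A2⟩, hAB, rfl⟩
        rcases mem_image.1 hB' with ⟨⟨A1', A2'⟩, hAB', he⟩
        have h1' := (mem_product.1 hAB').1
        have h2' := (mem_product.1 hAB').2
        have : (1, k'+2) ∈ asmN k A1 A2 := he ▸ one_mem_asmN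
        have := asmN_fst_one (mem_product.1 hAB).1 (mem_product.1 hAB).2 this
        omega
  · simp only [disjoint_left]
    intro B hB hB'
    rcases mem_image.1 hB with ⟨A, hA, rfl⟩
    rcases mem_biUnion.1 hB' with ⟨k, hk, h2⟩
    rcases mem_image.1 h2 with ⟨⟨A1, A2⟩, hAB, he⟩
    exact one_not_fst_sh1 hA (he ▸ one_mem_asmN (k := k) (A1 := A1) (A2 := A2))


def Free (A : Finset (ℕ × ℕ)) (x : ℕ) : Prop := ∀ p ∈ A, p.1 ≠ x ∧ p.2 ≠ x

def EArcD (m : ℕ) (A : Finset (ℕ × ℕ)) (p : ℕ × ℕ) : Prop :=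
  p ∈ A ∨ (p.1 = p.2 ∧ 1 ≤ p.1 ∧ p.1 ≤ m ∧ Free A p.1)

def En2 (m : ℕ) (A : Finset (ℕ × ℕ)) : Prop :=
  ∃ p q, EArcD m A p ∧ EArcD m A q ∧ p.1 < q.1 ∧ q.1 ≤ p.2 ∧ p.2 < q.2

def Eset (m : ℕ) : Finset (Finset (ℕ × ℕ)) :=
  ((Icc 1 m ×ˢ Icc 1 m).powerset).filter (fun A => Diag m A ∧ ¬ En2 m A)

def Mm (m : ℕ) : ℕ := (Eset m).card

lemma mem_Eset {m A} : A ∈ Eset m ↔ Diag m A ∧ ¬ En2 m A := by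
  constructor
  · intro h; exact (mem_filter.1 h).2
  · intro h; refine mem_filter.2 ⟨mem_powerset.2 ?_, h⟩
    intro p hp
    have := h.1.1 p hp
    cases p
    simp only [mem_product, mem_Icc]
    omega

lemma earc_bounds {w : ℕ} {A} (hb : ∀ p ∈ A, 1 ≤ p.1 ∧ p.1 < p.2 ∧ p.2 ≤ w)
    {p : ℕ × ℕ} (h : EArcD w A p) : 1 ≤ p.1 ∧ p.1 ≤ p.2 ∧ p.2 ≤ w := by
  rcases h with h | ⟨e, h1, h2, -⟩
  · have := hb p h; omega
  · omega

/-- assembly map for the Motzkin recurrence -/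
def asmE (k : ℕ) (A1 A2 : Finset (ℕ × ℕ)) : Finset (ℕ × ℕ) :=
  insert (1, k+2) (sh 1 A1 ∪ sh (k+2) A2)

lemma mem_asmE {k A1 A2} {p : ℕ × ℕ} :
    p ∈ asmE k A1 A2 ↔ (p.1 = 1 ∧ p.2 = k+2) ∨ (∃ q ∈ A1, p.1 = q.1 + 1 ∧ p.2 = q.2 + 1) ∨
      (∃ q ∈ A2, p.1 = q.1 + (k+2) ∧ p.2 = q.2 + (k+2)) := by
  simp [asmE, mem_sh, Prod.ext_iff]

lemma diag_asmE {m k : ℕ} (hk : k < m) {A1 A2}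
    (hb1 : ∀ p ∈ A1, 1 ≤ p.1 ∧ p.1 < p.2 ∧ p.2 ≤ k)
    (hl1 : ∀ p ∈ A1, ∀ q ∈ A1, p.1 = q.1 → p = q)
    (hr1 : ∀ p ∈ A1, ∀ q ∈ A1, p.2 = q.2 → p = q)
    (hb2 : ∀ p ∈ A2, 1 ≤ p.1 ∧ p.1 < p.2 ∧ p.2 ≤ m - 1 - k)
    (hl2 : ∀ p ∈ A2, ∀ q ∈ A2, p.1 = q.1 → p = q)
    (hr2 : ∀ p ∈ A2, ∀ q ∈ A2, p.2 = q.2 → p = q) :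
    Diag (m+1) (asmE k A1 A2) := by
  refine ⟨?_, ?_, ?_⟩
  · intro p hp
    rcases mem_asmE.1 hp with ⟨e1, e2⟩ | ⟨q, hq, e1, e2⟩ | ⟨q, hq, e1, e2⟩
    · omega
    · have := hb1 q hq; omega
    · have := hb2 q hq; omega
  · intro p hp p' hp' he
    rcases mem_asmE.1 hp with ⟨e1, e2⟩ | ⟨q, hq, e1, e2⟩ | ⟨q, hq, e1, e2⟩ <;>
      rcases mem_asmE.1 hp' with ⟨e1', e2'⟩ | ⟨q', hq', e1', e2'⟩ | ⟨q', hq', e1', e2'⟩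
    · exact Prod.ext (by omega) (by omega)
    · have := hb1 q' hq'; omega
    · have := hb2 q' hq'; omega
    · have := hb1 q hq; omega
    · have hb := hb1 q hq; have hb' := hb1 q' hq'
      have hqq : q = q' := hl1 q hq q' hq' (by omega)
      exact Prod.ext (by omega) (by rw [hqq] at e2; omega)
    · have := hb1 q hq; have := hb2 q' hq'; omega
    · have := hb2 q hq; omega
    · have := hb2 q hq; have := hb1 q' hq'; omega
    · have hb := hb2 q hq; have hb' := hb2 q' hq'
      have hqq : q = q' := hl2 q hq q' hq' (by omega)
      exact Prod.ext (by omega) (by rw [hqq] at e2; omega)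
  · intro p hp p' hp' he
    rcases mem_asmE.1 hp with ⟨e1, e2⟩ | ⟨q, hq, e1, e2⟩ | ⟨q, hq, e1, e2⟩ <;>
      rcases mem_asmE.1 hp' with ⟨e1', e2'⟩ | ⟨q', hq', e1', e2'⟩ | ⟨q', hq', e1', e2'⟩
    · exact Prod.ext (by omega) (by omega)
    · have := hb1 q' hq'; omega
    · have := hb2 q' hq'; omega
    · have := hb1 q hq; omega
    · have hb := hb1 q hq; have hb' := hb1 q' hq'
      have hqq : q = q' := hr1 q hq q' hq' (by omega)
      exact Prod.ext (by rw [hqq] at e1; omega) (by omega)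
    · have := hb1 q hq; have := hb2 q' hq'; omega
    · have := hb2 q hq; omega
    · have := hb2 q hq; have := hb1 q' hq'; omega
    · have hb := hb2 q hq; have hb' := hb2 q' hq'
      have hqq : q = q' := hr2 q hq q' hq' (by omega)
      exact Prod.ext (by rw [hqq] at e1; omega) (by omega)

lemma earc_asmE_of_A1 {m k : ℕ} (hk : k < m) {A1 A2}
    (hb1 : ∀ p ∈ A1, 1 ≤ p.1 ∧ p.1 < p.2 ∧ p.2 ≤ k)
    (hb2 : ∀ p ∈ A2, 1 ≤ p.1 ∧ p.1 < p.2 ∧ p.2 ≤ m - 1 - k)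
    {q : ℕ × ℕ} (h : EArcD k A1 q) :
    EArcD (m+1) (asmE k A1 A2) (q.1 + 1, q.2 + 1) := by
  rcases h with h | ⟨e, h1, h2, hf⟩
  · exact Or.inl (mem_asmE.2 (Or.inr (Or.inl ⟨q, h, rfl, rfl⟩)))
  · refine Or.inr ⟨by show q.1 + 1 = q.2 + 1; omega, by show 1 ≤ q.1 + 1; omega,
      by show q.1 + 1 ≤ m + 1; omega, ?_⟩
    intro p hp
    rcases mem_asmE.1 hp with ⟨e1, e2⟩ | ⟨r, hr, e1, e2⟩ | ⟨r, hr, e1, e2⟩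
    · constructor <;> · show _ ≠ q.1 + 1; omega
    · have := hf r hr
      constructor <;> · show _ ≠ q.1 + 1; omega
    · have := hb2 r hr
      constructor <;> · show _ ≠ q.1 + 1; omega

lemma earc_asmE_of_A2 {m k : ℕ} (hk : k < m) {A1 A2}
    (hb1 : ∀ p ∈ A1, 1 ≤ p.1 ∧ p.1 < p.2 ∧ p.2 ≤ k)
    (hb2 : ∀ p ∈ A2, 1 ≤ p.1 ∧ p.1 < p.2 ∧ p.2 ≤ m - 1 - k)
    {q : ℕ × ℕ} (h : EArcD (m-1-k) A2 q) :
    EArcD (m+1) (asmE k A1 A2) (q.1 + (k+2), q.2 + (k+2)) := by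
  rcases h with h | ⟨e, h1, h2, hf⟩
  · exact Or.inl (mem_asmE.2 (Or.inr (Or.inr ⟨q, h, rfl, rfl⟩)))
  · refine Or.inr ⟨by show q.1 + (k+2) = q.2 + (k+2); omega, by show 1 ≤ q.1 + (k+2); omega,
      by show q.1 + (k+2) ≤ m + 1; omega, ?_⟩
    intro p hp
    rcases mem_asmE.1 hp with ⟨e1, e2⟩ | ⟨r, hr, e1, e2⟩ | ⟨r, hr, e1, e2⟩
    · constructor <;> · show _ ≠ q.1 + (k+2); omega
    · have := hb1 r hr
      constructor <;> · show _ ≠ q.1 + (k+2); omega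
    · have := hf r hr
      constructor <;> · show _ ≠ q.1 + (k+2); omega

lemma earc_asmE_classify {m k : ℕ} (hk : k < m) {A1 A2}
    (hb1 : ∀ p ∈ A1, 1 ≤ p.1 ∧ p.1 < p.2 ∧ p.2 ≤ k)
    (hb2 : ∀ p ∈ A2, 1 ≤ p.1 ∧ p.1 < p.2 ∧ p.2 ≤ m - 1 - k)
    {p : ℕ × ℕ} (h : EArcD (m+1) (asmE k A1 A2) p) :
    (p.1 = 1 ∧ p.2 = k+2) ∨
    (∃ q, EArcD k A1 q ∧ p.1 = q.1 + 1 ∧ p.2 = q.2 + 1 ∧ 1 ≤ q.1 ∧ q.1 ≤ q.2 ∧ q.2 ≤ k) ∨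
    (∃ q, EArcD (m-1-k) A2 q ∧ p.1 = q.1 + (k+2) ∧ p.2 = q.2 + (k+2) ∧
      1 ≤ q.1 ∧ q.1 ≤ q.2 ∧ q.2 ≤ m-1-k) := by
  rcases h with h | ⟨e, h1, h2, hf⟩
  · rcases mem_asmE.1 h with ⟨e1, e2⟩ | ⟨q, hq, e1, e2⟩ | ⟨q, hq, e1, e2⟩
    · exact Or.inl ⟨e1, e2⟩
    · have := hb1 q hq
      exact Or.inr (Or.inl ⟨q, Or.inl hq, e1, e2, by omega, by omega, by omega⟩)
    · have := hb2 q hq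
      exact Or.inr (Or.inr ⟨q, Or.inl hq, e1, e2, by omega, by omega, by omega⟩)
  · -- p is a free singleton of the assembled diagram
    have hne1 : p.1 ≠ 1 := by
      intro he
      exact ((hf (1, k+2) (mem_asmE.2 (Or.inl ⟨rfl, rfl⟩))).1 (by omega)).elim
    have hnek : p.1 ≠ k + 2 := by
      intro he
      exact ((hf (1, k+2) (mem_asmE.2 (Or.inl ⟨rfl, rfl⟩))).2 (by omega)).elim
    rcases Nat.lt_or_ge p.1 (k+2) with hlt | hge
    · refine Or.inr (Or.inl ⟨(p.1 - 1, p.1 - 1), Or.inr ⟨rfl, by omega, by omega, ?_⟩,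
        by omega, by omega, by omega, by omega, by omega⟩)
      intro r hr
      have := hf (r.1 + 1, r.2 + 1) (mem_asmE.2 (Or.inr (Or.inl ⟨r, hr, rfl, rfl⟩)))
      have h1' : r.1 + 1 ≠ p.1 := this.1
      have h2' : r.2 + 1 ≠ p.1 := this.2
      constructor <;> · show _ ≠ p.1 - 1; omega
    · refine Or.inr (Or.inr ⟨(p.1 - (k+2), p.1 - (k+2)), Or.inr ⟨rfl, by omega, by omega, ?_⟩,
        by omega, by omega, by omega, by omega, by omega⟩)
      intro r hr
      have := hf (r.1 + (k+2), r.2 + (k+2))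
        (mem_asmE.2 (Or.inr (Or.inr ⟨r, hr, rfl, rfl⟩)))
      have h1' : r.1 + (k+2) ≠ p.1 := this.1
      have h2' : r.2 + (k+2) ≠ p.1 := this.2
      constructor <;> · show _ ≠ p.1 - (k+2); omega


lemma asmE_mem {m k : ℕ} (hk : k < m) {A1 A2} (h1 : A1 ∈ Eset k) (h2 : A2 ∈ Eset (m-1-k)) :
    asmE k A1 A2 ∈ Eset (m+1) := by
  obtain ⟨⟨b1, l1, r1⟩, nc1⟩ := mem_Eset.1 h1
  obtain ⟨⟨b2, l2, r2⟩, nc2⟩ := mem_Eset.1 h2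
  refine mem_Eset.2 ⟨diag_asmE hk b1 l1 r1 b2 l2 r2, ?_⟩
  rintro ⟨p, p', hp, hp', c1, c2, c3⟩
  rcases earc_asmE_classify hk b1 b2 hp with ⟨e1, e2⟩ | ⟨q, hq, e1, e2, d1, d2, d3⟩ |
      ⟨q, hq, e1, e2, d1, d2, d3⟩ <;>
    rcases earc_asmE_classify hk b1 b2 hp' with ⟨e1', e2'⟩ | ⟨q', hq', e1', e2', d1', d2', d3'⟩ |
      ⟨q', hq', e1', e2', d1', d2', d3'⟩
  · omega
  · omega
  · omega
  · omega
  · exact nc1 ⟨q, q', hq, hq', by omega, by omega, by omega⟩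
  · omega
  · omega
  · omega
  · exact nc2 ⟨q, q', hq, hq', by omega, by omega, by omega⟩

lemma sh1_mem_E {m : ℕ} {A} (h : A ∈ Eset m) : sh 1 A ∈ Eset (m+1) := by
  obtain ⟨⟨hb, hl, hr⟩, hnc⟩ := mem_Eset.1 h
  have hdiag : Diag (m+1) (sh 1 A) := by
    refine ⟨?_, ?_, ?_⟩
    · intro p hp
      rcases mem_sh.1 hp with ⟨q, hq, e1, e2⟩
      have := hb q hq; omega
    · intro p hp p' hp' he
      rcases mem_sh.1 hp with ⟨q, hq, e1, e2⟩
      rcases mem_sh.1 hp' with ⟨q', hq', e1', e2'⟩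
      have hqq : q = q' := hl q hq q' hq' (by omega)
      exact Prod.ext (by omega) (by rw [hqq] at e2; omega)
    · intro p hp p' hp' he
      rcases mem_sh.1 hp with ⟨q, hq, e1, e2⟩
      rcases mem_sh.1 hp' with ⟨q', hq', e1', e2'⟩
      have hqq : q = q' := hr q hq q' hq' (by omega)
      exact Prod.ext (by rw [hqq] at e1; omega) (by omega)
  refine mem_Eset.2 ⟨hdiag, ?_⟩
  have classify : ∀ p : ℕ × ℕ, EArcD (m+1) (sh 1 A) p → (p.1 = 1 ∧ p.2 = 1) ∨
      (∃ q, EArcD m A q ∧ p.1 = q.1 + 1 ∧ p.2 = q.2 + 1 ∧ 1 ≤ q.1 ∧ q.1 ≤ q.2 ∧ q.2 ≤ m) := by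
    intro p hp
    rcases hp with hp | ⟨e, h1, h2, hf⟩
    · rcases mem_sh.1 hp with ⟨q, hq, e1, e2⟩
      have := hb q hq
      exact Or.inr ⟨q, Or.inl hq, e1, e2, by omega, by omega, by omega⟩
    · rcases Nat.lt_or_ge p.1 2 with hlt | hge
      · exact Or.inl ⟨by omega, by omega⟩
      · refine Or.inr ⟨(p.1 - 1, p.1 - 1), Or.inr ⟨rfl, by omega, by omega, ?_⟩,
          by omega, by omega, by omega, by omega, by omega⟩
        intro r hr
        have := hf (r.1 + 1, r.2 + 1) (mem_sh.2 ⟨r, hr, rfl, rfl⟩)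
        have h1' : r.1 + 1 ≠ p.1 := this.1
        have h2' : r.2 + 1 ≠ p.1 := this.2
        constructor <;> · show _ ≠ p.1 - 1; omega
  rintro ⟨p, p', hp, hp', c1, c2, c3⟩
  rcases classify p hp with ⟨e1, e2⟩ | ⟨q, hq, e1, e2, d1, d2, d3⟩ <;>
    rcases classify p' hp' with ⟨e1', e2'⟩ | ⟨q', hq', e1', e2', d1', d2', d3'⟩
  · omega
  · omega
  · omega
  · exact hnc ⟨q, q', hq, hq', by omega, by omega, by omega⟩

lemma unsh_mem_Eset {M w c : ℕ} {B B' : Finset (ℕ × ℕ)} (hB : B ∈ Eset M) (hsub : B' ⊆ B)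
    (hrange : ∀ p ∈ B', c + 1 ≤ p.1 ∧ p.2 ≤ c + w)
    (hfull : ∀ p ∈ B, (c + 1 ≤ p.1 ∧ p.1 ≤ c + w) ∨ (c + 1 ≤ p.2 ∧ p.2 ≤ c + w) → p ∈ B')
    (hcw : c + w ≤ M) : unsh c B' ∈ Eset w := by
  obtain ⟨⟨hb, hl, hr⟩, hnc⟩ := mem_Eset.1 hB
  have hdiag : Diag w (unsh c B') := by
    refine ⟨?_, ?_, ?_⟩
    · intro q hq
      rcases mem_unsh.1 hq with ⟨p, hp, rfl⟩
      have h1 := hrange p hp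
      have h2 := hb p (hsub hp)
      simp only
      omega
    · intro q hq q' hq' he
      rcases mem_unsh.1 hq with ⟨p, hp, rfl⟩
      rcases mem_unsh.1 hq' with ⟨p', hp', rfl⟩
      have h1 := hrange p hp
      have h1' := hrange p' hp'
      have : p = p' := hl p (hsub hp) p' (hsub hp') (by simp only at he ⊢; omega)
      rw [this]
    · intro q hq q' hq' he
      rcases mem_unsh.1 hq with ⟨p, hp, rfl⟩
      rcases mem_unsh.1 hq' with ⟨p', hp', rfl⟩
      have h1 := hrange p hp
      have h1' := hrange p' hp'
      have h2 := hb p (hsub hp)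
      have h2' := hb p' (hsub hp')
      have : p = p' := hr p (hsub hp) p' (hsub hp') (by simp only at he ⊢; omega)
      rw [this]
  refine mem_Eset.2 ⟨hdiag, ?_⟩
  have up : ∀ q : ℕ × ℕ, EArcD w (unsh c B') q →
      EArcD M B (q.1 + c, q.2 + c) ∧ 1 ≤ q.1 ∧ q.1 ≤ q.2 ∧ q.2 ≤ w := by
    intro q hq
    have hbnd := earc_bounds hdiag.1 hq
    refine ⟨?_, hbnd⟩
    rcases hq with hq | ⟨e, h1, h2, hf⟩
    · rcases mem_unsh.1 hq with ⟨p, hp, rfl⟩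
      have h1 := hrange p hp
      have h2 := hb p (hsub hp)
      have : (p.1 - c + c, p.2 - c + c) = p := Prod.ext (by show p.1 - c + c = p.1; omega)
        (by show p.2 - c + c = p.2; omega)
      exact Or.inl (by rw [this]; exact hsub hp)
    · refine Or.inr ⟨by show q.1 + c = q.2 + c; omega, by omega, by omega, ?_⟩
      intro p hp
      by_cases hcase : (c + 1 ≤ p.1 ∧ p.1 ≤ c + w) ∨ (c + 1 ≤ p.2 ∧ p.2 ≤ c + w)
      · have hp' : p ∈ B' := hfull p hp hcase
        have h3 := hrange p hp'
        have h4 := hb p hp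
        have := hf (p.1 - c, p.2 - c) (mem_unsh.2 ⟨p, hp', rfl⟩)
        have h5 : p.1 - c ≠ q.1 := this.1
        have h6 : p.2 - c ≠ q.1 := this.2
        constructor <;> omega
      · push_neg at hcase
        have h4 := hb p hp
        constructor <;> omega
  rintro ⟨q, q', hq, hq', c1, c2, c3⟩
  obtain ⟨e, d1, d2, d3⟩ := up q hq
  obtain ⟨e', d1', d2', d3'⟩ := up q' hq'
  exact hnc ⟨_, _, e, e', by omega, by omega, by omega⟩


lemma Eset_succ (m : ℕ) :
    Eset (m+1) = (Eset m).image (sh 1) ∪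
      (range m).biUnion (fun k =>
        ((Eset k ×ˢ Eset (m-1-k))).image (fun AB => asmE k AB.1 AB.2)) := by
  ext B
  constructor
  · intro hB
    obtain ⟨⟨hb, hl, hr⟩, hnc⟩ := mem_Eset.1 hB
    by_cases h1 : ∃ b, (1, b) ∈ B
    · obtain ⟨b, hbB⟩ := h1
      have hbnd := hb _ hbB
      simp only at hbnd
      have straddle : ∀ p ∈ B, (p.1 = 1 ∧ p.2 = b) ∨ (2 ≤ p.1 ∧ p.2 + 1 ≤ b) ∨ (b + 1 ≤ p.1) := by
        intro p hp
        have hpb := hb p hp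
        by_cases hc1 : p.1 = 1
        · have hpe : p = (1, b) := hl p hp (1, b) hbB hc1
          exact Or.inl ⟨hc1, (congrArg Prod.snd hpe : p.2 = b)⟩
        · by_cases hc2 : b + 1 ≤ p.1
          · exact Or.inr (Or.inr hc2)
          · by_cases hc3 : p.2 = b
            · have hpe : p = (1, b) := hr p hp (1, b) hbB hc3
              have : p.1 = 1 := congrArg Prod.fst hpe
              omega
            · by_cases hc4 : p.1 = b
              · exact absurd ⟨(1, b), p, Or.inl hbB, Or.inl hp, by show 1 < p.1; omega,
                  by show p.1 ≤ b; omega, by show b < p.2; omega⟩ hnc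
              · rcases Nat.lt_or_ge p.2 b with hlt | hge
                · exact Or.inr (Or.inl (by omega))
                · exact absurd ⟨(1, b), p, Or.inl hbB, Or.inl hp, by show 1 < p.1; omega,
                    by show p.1 ≤ b; omega, by show b < p.2; omega⟩ hnc
      set k := b - 2 with hkdef
      set A1 := unsh 1 (B.filter (fun p => 2 ≤ p.1 ∧ p.2 + 1 ≤ b)) with hA1
      set A2 := unsh b (B.filter (fun p => b + 1 ≤ p.1)) with hA2
      have hA1m : A1 ∈ Eset k := by
        apply unsh_mem_Eset hB (filter_subset _ _) ?_ ?_ (by omega)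
        · intro p hp
          rcases mem_filter.1 hp with ⟨hpB, h2, h3⟩
          omega
        · intro p hp hcase
          refine mem_filter.2 ⟨hp, ?_⟩
          rcases straddle p hp with ⟨e1, e2⟩ | ⟨e1, e2⟩ | e1
          · omega
          · omega
          · have := hb p hp; omega
      have hA2m : A2 ∈ Eset (m - 1 - k) := by
        apply unsh_mem_Eset hB (filter_subset _ _) ?_ ?_ (by omega)
        · intro p hp
          rcases mem_filter.1 hp with ⟨hpB, h2⟩
          have := hb p hpB
          omega
        · intro p hp hcase
          refine mem_filter.2 ⟨hp, ?_⟩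
          rcases straddle p hp with ⟨e1, e2⟩ | ⟨e1, e2⟩ | e1
          · omega
          · omega
          · omega
      have hBeq : B = asmE k A1 A2 := by
        ext p
        constructor
        · intro hp
          have hpb := hb p hp
          rcases straddle p hp with ⟨e1, e2⟩ | ⟨e1, e2⟩ | e1
          · exact mem_asmE.2 (Or.inl ⟨e1, by omega⟩)
          · refine mem_asmE.2 (Or.inr (Or.inl ⟨(p.1 - 1, p.2 - 1), ?_, ?_, ?_⟩))
            · exact mem_unsh.2 ⟨p, mem_filter.2 ⟨hp, e1, e2⟩, rfl⟩
            · show p.1 = p.1 - 1 + 1; omega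
            · show p.2 = p.2 - 1 + 1; omega
          · refine mem_asmE.2 (Or.inr (Or.inr ⟨(p.1 - b, p.2 - b), ?_, ?_, ?_⟩))
            · exact mem_unsh.2 ⟨p, mem_filter.2 ⟨hp, e1⟩, rfl⟩
            · show p.1 = p.1 - b + (k+2); omega
            · show p.2 = p.2 - b + (k+2); omega
        · intro hp
          rcases mem_asmE.1 hp with ⟨e1, e2⟩ | ⟨q, hq, e1, e2⟩ | ⟨q, hq, e1, e2⟩
          · have : p = (1, b) := Prod.ext (e1 : p.1 = 1) (by show p.2 = b; omega)
            rw [this]; exact hbB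
          · rcases mem_unsh.1 hq with ⟨p', hp', hqe⟩
            rcases mem_filter.1 hp' with ⟨hp'B, h2, h3⟩
            have hb' := hb p' hp'B
            have hq1 : q.1 = p'.1 - 1 := congrArg Prod.fst hqe
            have hq2 : q.2 = p'.2 - 1 := congrArg Prod.snd hqe
            have : p = p' := Prod.ext (by omega) (by omega)
            rw [this]; exact hp'B
          · rcases mem_unsh.1 hq with ⟨p', hp', hqe⟩
            rcases mem_filter.1 hp' with ⟨hp'B, h2⟩
            have hb' := hb p' hp'B
            have hq1 : q.1 = p'.1 - b := congrArg Prod.fst hqe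
            have hq2 : q.2 = p'.2 - b := congrArg Prod.snd hqe
            have : p = p' := Prod.ext (by omega) (by omega)
            rw [this]; exact hp'B
      refine mem_union_right _ (mem_biUnion.2 ⟨k, mem_range.2 (by omega), ?_⟩)
      exact mem_image.2 ⟨(A1, A2), mem_product.2 ⟨hA1m, hA2m⟩, hBeq.symm⟩
    · refine mem_union_left _ (mem_image.2 ⟨unsh 1 B, ?_, ?_⟩)
      · apply unsh_mem_Eset hB (subset_refl _) ?_ (fun p hp _ => hp) (by omega)
        intro p hp
        have := hb p hp
        refine ⟨?_, by omega⟩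
        rcases Nat.lt_or_ge p.1 2 with hlt | hge
        · exact absurd ⟨p.2, by rwa [show (1, p.2) = p from Prod.ext (by omega) rfl]⟩ h1
        · omega
      · rw [sh_unsh]
        intro p hp
        have := hb p hp
        omega
  · intro hB
    rcases mem_union.1 hB with h | h
    · rcases mem_image.1 h with ⟨A, hA, rfl⟩
      exact sh1_mem_E hA
    · rcases mem_biUnion.1 h with ⟨k, hk, h2⟩
      rcases mem_image.1 h2 with ⟨AB, hAB, rfl⟩
      have := mem_product.1 hAB
      exact asmE_mem (mem_range.1 hk) this.1 this.2

lemma one_not_fst_sh1E {m : ℕ} {A} (hA : A ∈ Eset m) {x : ℕ} : (1, x) ∉ sh 1 A := by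
  intro hx
  rcases mem_sh.1 hx with ⟨q, hq, e1, e2⟩
  have := (mem_Eset.1 hA).1.1 q hq
  omega

lemma one_mem_asmE {k A1 A2} : (1, k+2) ∈ asmE k A1 A2 :=
  mem_asmE.2 (Or.inl ⟨rfl, rfl⟩)

lemma asmE_fst_one {k w : ℕ} {A1 A2 x} (h1 : A1 ∈ Eset k) (h2 : A2 ∈ Eset w)
    (hx : (1, x) ∈ asmE k A1 A2) : x = k + 2 := by
  rcases mem_asmE.1 hx with ⟨e1, e2⟩ | ⟨q, hq, e1, e2⟩ | ⟨q, hq, e1, e2⟩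
  · exact e2
  · have := (mem_Eset.1 h1).1.1 q hq; simp at e1; omega
  · have := (mem_Eset.1 h2).1.1 q hq; simp at e1; omega

lemma sh1_A1_filterE {m k : ℕ} {A1 A2} (h1 : A1 ∈ Eset k) (h2 : A2 ∈ Eset (m-1-k)) :
    sh 1 A1 = (asmE k A1 A2).filter (fun p => p.2 ≤ k + 1) := by
  obtain ⟨⟨b1, -, -⟩, -⟩ := mem_Eset.1 h1
  obtain ⟨⟨b2, -, -⟩, -⟩ := mem_Eset.1 h2
  ext p
  constructor
  · intro hp
    rcases mem_sh.1 hp with ⟨q, hq, e1, e2⟩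
    have := b1 q hq
    refine mem_filter.2 ⟨mem_asmE.2 (Or.inr (Or.inl ⟨q, hq, e1, e2⟩)), by omega⟩
  · intro hp
    rcases mem_filter.1 hp with ⟨hp1, hp2⟩
    rcases mem_asmE.1 hp1 with ⟨e1, e2⟩ | ⟨q, hq, e1, e2⟩ | ⟨q, hq, e1, e2⟩
    · omega
    · exact mem_sh.2 ⟨q, hq, e1, e2⟩
    · have := b2 q hq; omega

lemma sh_A2_filterE {m k : ℕ} {A1 A2} (h1 : A1 ∈ Eset k) (h2 : A2 ∈ Eset (m-1-k)) :
    sh (k+2) A2 = (asmE k A1 A2).filter (fun p => k + 3 ≤ p.1) := by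
  obtain ⟨⟨b1, -, -⟩, -⟩ := mem_Eset.1 h1
  obtain ⟨⟨b2, -, -⟩, -⟩ := mem_Eset.1 h2
  ext p
  constructor
  · intro hp
    rcases mem_sh.1 hp with ⟨q, hq, e1, e2⟩
    have := b2 q hq
    refine mem_filter.2 ⟨mem_asmE.2 (Or.inr (Or.inr ⟨q, hq, e1, e2⟩)), by omega⟩
  · intro hp
    rcases mem_filter.1 hp with ⟨hp1, hp2⟩
    rcases mem_asmE.1 hp1 with ⟨e1, e2⟩ | ⟨q, hq, e1, e2⟩ | ⟨q, hq, e1, e2⟩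
    · omega
    · have := b1 q hq; omega
    · exact mem_sh.2 ⟨q, hq, e1, e2⟩

lemma Mm_rec (m : ℕ) : Mm (m+1) = Mm m + ∑ k ∈ range m, Mm k * Mm (m-1-k) := by
  rw [Mm, Eset_succ m]
  rw [card_union_of_disjoint]
  · congr 1
    · rw [card_image_of_injOn (fun A _ B _ h => sh_inj h)]; rfl
    · rw [card_biUnion]
      · refine sum_congr rfl (fun k hk => ?_)
        rw [card_image_of_injOn, card_product]
        · rfl
        rintro ⟨A1, A2⟩ hAB ⟨A1', A2'⟩ hAB' he
        rcases mem_coe.1 hAB with hAB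
        rcases mem_coe.1 hAB' with hAB'
        have h1 := (mem_product.1 hAB).1
        have h2 := (mem_product.1 hAB).2
        have h1' := (mem_product.1 hAB').1
        have h2' := (mem_product.1 hAB').2
        simp only at he
        have e1 : A1 = A1' := by
          apply sh_inj (c := 1)
          rw [sh1_A1_filterE h1 h2, sh1_A1_filterE h1' h2', he]
        have e2 : A2 = A2' := by
          apply sh_inj (c := k+2)
          rw [sh_A2_filterE h1 h2, sh_A2_filterE h1' h2', he]
        rw [e1, e2]
      · intro k hk k' hk' hne
        simp only [disjoint_left]
        intro B hB hB'
        rcases mem_image.1 hB with ⟨⟨A1, A2⟩, hAB, rfl⟩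
        rcases mem_image.1 hB' with ⟨⟨A1', A2'⟩, hAB', he⟩
        have : (1, k'+2) ∈ asmE k A1 A2 := he ▸ one_mem_asmE
        have := asmE_fst_one (mem_product.1 hAB).1 (mem_product.1 hAB).2 this
        omega
  · simp only [disjoint_left]
    intro B hB hB'
    rcases mem_image.1 hB with ⟨A, hA, rfl⟩
    rcases mem_biUnion.1 hB' with ⟨k, hk, h2⟩
    rcases mem_image.1 h2 with ⟨⟨A1, A2⟩, hAB, he⟩
    exact one_not_fst_sh1E hA (he ▸ one_mem_asmE (k := k) (A1 := A1) (A2 := A2))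


lemma NCset_zero : NCset 0 = {∅} := by
  ext A
  simp only [mem_NCset, mem_singleton]
  constructor
  · rintro ⟨⟨hb, -, -⟩, -⟩
    ext p
    simp only [notMem_empty, iff_false]
    intro hp; have := hb p hp; omega
  · rintro rfl
    refine ⟨⟨?_, ?_, ?_⟩, ?_⟩
    · intro p hp; simp at hp
    · intro p hp; simp at hp
    · intro p hp; simp at hp
    · rintro ⟨p, hp, -⟩; simp at hp

lemma Eset_zero : Eset 0 = {∅} := by
  ext A
  simp only [mem_Eset, mem_singleton]
  constructor
  · rintro ⟨⟨hb, -, -⟩, -⟩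
    ext p
    simp only [notMem_empty, iff_false]
    intro hp; have := hb p hp; omega
  · rintro rfl
    refine ⟨⟨?_, ?_, ?_⟩, ?_⟩
    · intro p hp; simp at hp
    · intro p hp; simp at hp
    · intro p hp; simp at hp
    · rintro ⟨p, q, hp, hq, h1, h2, h3⟩
      rcases hp with hp | hp
      · simp at hp
      · omega

lemma Nn_zero : Nn 0 = 1 := by rw [Nn, NCset_zero]; simp
lemma Mm_zero : Mm 0 = 1 := by rw [Mm, Eset_zero]; simp

lemma hockey (b : ℕ) : ∀ N, ∑ t ∈ range N, t.choose b = N.choose (b+1) := by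
  intro N
  induction N with
  | zero => simp
  | succ n ih => rw [sum_range_succ, ih, Nat.choose_succ_succ (n) (b)]; ring

lemma vand (N : ℕ) : ∀ a b, ∑ t ∈ range N, (t.choose a) * ((N-1-t).choose b)
    = N.choose (a+b+1) := by
  induction N with
  | zero => simp
  | succ N ih =>
    intro a b
    cases a with
    | zero =>
      simp only [Nat.choose_zero_right, one_mul, Nat.zero_add]
      rw [← hockey b (N+1)]
      exact Finset.sum_range_reflect (fun u => u.choose b) (N+1)
    | succ a' =>
      rw [Finset.sum_range_succ']
      have h0 : (0:ℕ).choose (a'+1) * ((N+1-1-0).choose b) = 0 := by simp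
      rw [h0, add_zero]
      have : ∀ i ∈ range N, (i+1).choose (a'+1) * ((N+1-1-(i+1)).choose b)
          = i.choose a' * ((N-1-i).choose b) + i.choose (a'+1) * ((N-1-i).choose b) := by
        intro i hi
        have e : N + 1 - 1 - (i+1) = N - 1 - i := by omega
        rw [e, Nat.choose_succ_succ, add_mul]
      rw [sum_congr rfl this, sum_add_distrib, ih a' b, ih (a'+1) b]
      have : (N+1).choose (a'+1+b+1) = N.choose (a'+b+1) + N.choose (a'+1+b+1) := by
        rw [show a'+1+b+1 = (a'+b+1)+1 by ring, Nat.choose_succ_succ]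
      rw [this]

def G (n : ℕ) : ℕ := ∑ i ∈ range (n+1), n.choose i * Mm i

lemma inner_square (m j : ℕ) (hj : j ≤ m) :
    ∑ a ∈ range (m+1), ∑ b ∈ range (m+1), (if j = a + b + 1 then Mm a * Mm b else 0)
      = ∑ k ∈ range j, Mm k * Mm (j-1-k) := by
  have hb : ∀ a ∈ range (m+1), (∑ b ∈ range (m+1), if j = a + b + 1 then Mm a * Mm b else 0)
      = if a + 1 ≤ j then Mm a * Mm (j-1-a) else 0 := by
    intro a _
    by_cases haj : a + 1 ≤ j
    · rw [if_pos haj]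
      rw [Finset.sum_eq_single_of_mem (j - 1 - a) (mem_range.2 (by omega))
        (fun c _ hne => if_neg (by omega))]
      rw [if_pos (by omega)]
    · rw [if_neg haj]
      exact Finset.sum_eq_zero (fun c _ => if_neg (by omega))
  rw [sum_congr rfl hb]
  rw [← Finset.sum_subset (Finset.range_subset_range.2 (by omega : j ≤ m + 1))
    (fun a _ ha => if_neg (by simp at ha; omega))]
  exact Finset.sum_congr rfl (fun a ha => if_pos (by simp at ha; omega))

lemma G_pad (j R : ℕ) (h : j + 1 ≤ R) : G j = ∑ a ∈ range R, j.choose a * Mm a := by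
  rw [G]
  apply Finset.sum_subset (Finset.range_subset_range.2 h)
  intro a _ ha
  simp only [mem_range, not_lt] at ha
  rw [Nat.choose_eq_zero_of_lt (by omega), zero_mul]

lemma S1_eq (m : ℕ) :
    ∑ j ∈ range m, G j * G (m-1-j)
      = ∑ a ∈ range (m+1), ∑ b ∈ range (m+1), (Mm a * Mm b) * (m.choose (a+b+1)) := by
  have step1 : ∀ j ∈ range m, G j * G (m-1-j)
      = ∑ a ∈ range (m+1), ∑ b ∈ range (m+1),
          (Mm a * Mm b) * (j.choose a * ((m-1-j).choose b)) := by
    intro j hj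
    have hjm := mem_range.1 hj
    rw [G_pad j (m+1) (by omega), G_pad (m-1-j) (m+1) (by omega)]
    rw [Finset.sum_mul_sum]
    apply sum_congr rfl; intro a _
    apply sum_congr rfl; intro b _
    ring
  rw [sum_congr rfl step1]
  rw [Finset.sum_comm]
  apply sum_congr rfl; intro a _
  rw [Finset.sum_comm]
  apply sum_congr rfl; intro b _
  rw [← Finset.mul_sum]
  congr 1
  exact vand m a b

lemma g_rec (m : ℕ) : G (m+1) = 2 * G m + ∑ j ∈ range m, G j * G (m-1-j) := by
  have pascal : ∀ i ∈ range (m+2), (m+1).choose i * Mm i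
      = m.choose i * Mm i + (if 1 ≤ i then m.choose (i-1) * Mm i else 0) := by
    intro i _
    cases i with
    | zero => simp
    | succ i' =>
      rw [if_pos (by omega), Nat.succ_sub_one, Nat.choose_succ_succ, add_mul]
      ring
  rw [G, sum_congr rfl pascal, sum_add_distrib]
  have e1 : ∑ i ∈ range (m+2), m.choose i * Mm i = G m := by
    rw [G]
    rw [Finset.sum_range_succ]
    rw [Nat.choose_eq_zero_of_lt (by omega), zero_mul, add_zero]
  have e2 : ∑ i ∈ range (m+2), (if 1 ≤ i then m.choose (i-1) * Mm i else 0)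
      = ∑ j ∈ range (m+1), m.choose j * Mm (j+1) := by
    rw [Finset.sum_range_succ']
    simp only [if_neg (by omega : ¬ (1:ℕ) ≤ 0), add_zero]
    apply sum_congr rfl; intro j _
    rw [if_pos (by omega)]
    norm_num
  rw [e1, e2]
  have e3 : ∀ j ∈ range (m+1), m.choose j * Mm (j+1)
      = m.choose j * Mm j + m.choose j * (∑ k ∈ range j, Mm k * Mm (j-1-k)) := by
    intro j _
    rw [Mm_rec j, mul_add]
  rw [sum_congr rfl e3, sum_add_distrib, ← G]
  have e4 : ∑ j ∈ range (m+1), m.choose j * (∑ k ∈ range j, Mm k * Mm (j-1-k))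
      = ∑ j ∈ range m, G j * G (m-1-j) := by
    rw [S1_eq]
    have : ∀ j ∈ range (m+1), m.choose j * (∑ k ∈ range j, Mm k * Mm (j-1-k))
        = ∑ a ∈ range (m+1), ∑ b ∈ range (m+1),
            (if j = a + b + 1 then (Mm a * Mm b) * m.choose j else 0) := by
      intro j hj
      rw [← inner_square m j (by have := mem_range.1 hj; omega), Finset.mul_sum]
      apply sum_congr rfl; intro a _
      rw [Finset.mul_sum]
      apply sum_congr rfl; intro b _
      rw [mul_ite, mul_zero]
      rcases eq_or_ne j (a+b+1) with h | h
      · rw [if_pos h, if_pos h]; ring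
      · rw [if_neg h, if_neg h]
    rw [sum_congr rfl this]
    rw [Finset.sum_comm]
    apply sum_congr rfl; intro a _
    rw [Finset.sum_comm]
    apply sum_congr rfl; intro b _
    rcases Nat.lt_or_ge (a+b+1) (m+1) with hlt | hge
    · rw [Finset.sum_eq_single_of_mem (a+b+1) (mem_range.2 hlt)
        (fun c _ hne => if_neg (by omega))]
      rw [if_pos rfl]
    · rw [Nat.choose_eq_zero_of_lt (by omega), mul_zero]
      exact Finset.sum_eq_zero (fun c _ => if_neg (by have := mem_range.1 ‹c ∈ range (m+1)›; omega))
  rw [e4]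
  ring

theorem core (n : ℕ) : Nn (n+1) = G n := by
  induction n using Nat.strong_induction_on with
  | _ n ih =>
    cases n with
    | zero =>
      rw [Nn_rec 0, Nn_zero, G, sum_range_one]
      simp [Mm_zero]
    | succ m =>
      rw [Nn_rec (m+1), Finset.sum_range_succ']
      have e : ∀ j ∈ range m, Nn (j+1) * Nn (m+1-(j+1)) = G j * G (m-1-j) := by
        intro j hj
        have hjm := mem_range.1 hj
        have e1 : Nn (j+1) = G j := ih j (by omega)
        have e2 : m + 1 - (j+1) = (m-1-j) + 1 := by omega
        rw [e1, e2, ih (m-1-j) (by omega)]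
      rw [sum_congr rfl e]
      have h00 : Nn 0 * Nn (m + 1 - 0) = G m := by
        rw [Nn_zero, one_mul, Nat.sub_zero]
        exact ih m (by omega)
      rw [h00, ih m (by omega), g_rec m]
      ring


variable {m : ℕ}

def arcFinset (π : Finpartition (Icc 1 m)) : Finset (ℕ × ℕ) :=
  ((Icc 1 m) ×ˢ (Icc 1 m)).filter (fun p => IsArc π p.1 p.2)

lemma isArc_mem {π : Finpartition (Icc 1 m)} {a b : ℕ} (h : IsArc π a b) :
    a ∈ Icc 1 m ∧ b ∈ Icc 1 m := by
  obtain ⟨hab, B, hB, ha, hb, -⟩ := h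
  exact ⟨π.le hB ha, π.le hB hb⟩

lemma mem_arcFinset {π : Finpartition (Icc 1 m)} {p : ℕ × ℕ} :
    p ∈ arcFinset π ↔ IsArc π p.1 p.2 := by
  rw [arcFinset, mem_filter, mem_product]
  exact ⟨fun h => h.2, fun h => ⟨⟨(isArc_mem h).1, (isArc_mem h).2⟩, h⟩⟩

lemma isArc_bounds {π : Finpartition (Icc 1 m)} {a b : ℕ} (h : IsArc π a b) :
    1 ≤ a ∧ a < b ∧ b ≤ m := by
  have h2 := isArc_mem h
  simp only [mem_Icc] at h2
  exact ⟨h2.1.1, h.1, h2.2.2⟩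

lemma isArc_right_unique {π : Finpartition (Icc 1 m)} {a b b' : ℕ}
    (h : IsArc π a b) (h' : IsArc π a b') : b = b' := by
  obtain ⟨hab, B, hB, haB, hbB, hbet⟩ := h
  obtain ⟨hab', B', hB', haB', hbB', hbet'⟩ := h'
  have hBB : B = B' := π.eq_of_mem_parts hB hB' haB haB'
  subst hBB
  rcases Nat.lt_trichotomy b b' with hl | he | hl
  · exact absurd ⟨hab, hl⟩ (hbet' b hbB)
  · exact he
  · exact absurd ⟨hab', hl⟩ (hbet b' hbB')

lemma isArc_left_unique {π : Finpartition (Icc 1 m)} {a a' b : ℕ}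
    (h : IsArc π a b) (h' : IsArc π a' b) : a = a' := by
  obtain ⟨hab, B, hB, haB, hbB, hbet⟩ := h
  obtain ⟨hab', B', hB', haB', hbB', hbet'⟩ := h'
  have hBB : B = B' := π.eq_of_mem_parts hB hB' hbB hbB'
  subst hBB
  rcases Nat.lt_trichotomy a a' with hl | he | hl
  · exact absurd ⟨hl, hab'⟩ (hbet a' haB')
  · exact he
  · exact absurd ⟨hl, hab⟩ (hbet' a haB)

lemma diag_arcFinset (π : Finpartition (Icc 1 m)) : Diag m (arcFinset π) := by
  refine ⟨?_, ?_, ?_⟩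
  · intro p hp
    exact isArc_bounds (mem_arcFinset.1 hp)
  · intro p hp q hq he
    have h1 := mem_arcFinset.1 hp
    have h2 := mem_arcFinset.1 hq
    rw [he] at h1
    exact Prod.ext he (isArc_right_unique h1 h2)
  · intro p hp q hq he
    have h1 := mem_arcFinset.1 hp
    have h2 := mem_arcFinset.1 hq
    rw [he] at h1
    exact Prod.ext (isArc_left_unique h1 h2) he

lemma singleton_mem_iff {π : Finpartition (Icc 1 m)} {x : ℕ} :
    {x} ∈ π.parts ↔ (1 ≤ x ∧ x ≤ m ∧ Free (arcFinset π) x) := by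
  constructor
  · intro h
    have hxs : x ∈ Icc 1 m := π.le h (mem_singleton_self x)
    rw [mem_Icc] at hxs
    refine ⟨hxs.1, hxs.2, ?_⟩
    intro p hp
    have harc := mem_arcFinset.1 hp
    obtain ⟨hab, B, hB, haB, hbB, -⟩ := harc
    constructor
    · intro he
      have : B = {x} := π.eq_of_mem_parts hB h (he ▸ haB) (mem_singleton_self x)
      rw [this] at hbB
      rw [mem_singleton] at hbB
      omega
    · intro he
      have : B = {x} := π.eq_of_mem_parts hB h (he ▸ hbB) (mem_singleton_self x)
      rw [this] at haB
      rw [mem_singleton] at haB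
      omega
  · rintro ⟨h1, h2, hf⟩
    have hxs : x ∈ Icc 1 m := mem_Icc.2 ⟨h1, h2⟩
    have hBx : x ∈ π.part x := π.mem_part hxs
    have hBm : π.part x ∈ π.parts := π.part_mem.2 hxs
    have key : ∀ y ∈ π.part x, y = x := by
      intro y hy
      by_contra hne
      rcases Nat.lt_or_ge x y with hlt | hge
      · set T := (π.part x).filter (fun z => x < z) with hT
        have hTne : T.Nonempty := ⟨y, mem_filter.2 ⟨hy, hlt⟩⟩
        set c := T.min' hTne with hc
        have hcT := T.min'_mem hTne
        rcases mem_filter.1 hcT with ⟨hcB, hxc⟩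
        have harc : IsArc π x c := by
          refine ⟨hxc, π.part x, hBm, hBx, hcB, ?_⟩
          intro z hz
          rintro ⟨hz1, hz2⟩
          have : c ≤ z := T.min'_le z (mem_filter.2 ⟨hz, hz1⟩)
          omega
        exact (hf (x, c) (mem_arcFinset.2 harc)).1 rfl
      · have hlt : y < x := by omega
        set T := (π.part x).filter (fun z => z < x) with hT
        have hTne : T.Nonempty := ⟨y, mem_filter.2 ⟨hy, hlt⟩⟩
        set c := T.max' hTne with hc
        have hcT := T.max'_mem hTne
        rcases mem_filter.1 hcT with ⟨hcB, hxc⟩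
        have harc : IsArc π c x := by
          refine ⟨hxc, π.part x, hBm, hcB, hBx, ?_⟩
          intro z hz
          rintro ⟨hz1, hz2⟩
          have : z ≤ c := T.le_max' z (mem_filter.2 ⟨hz, hz2⟩)
          omega
        exact (hf (c, x) (mem_arcFinset.2 harc)).2 rfl
    have : π.part x = {x} := by
      rw [Finset.eq_singleton_iff_unique_mem]
      exact ⟨hBx, key⟩
    rw [← this]
    exact hBm

lemma sm2 {f : Fin 2 → ℕ} (h : f 0 < f 1) : StrictMono f := by
  intro i j hij
  fin_cases i <;> fin_cases j
  · exact absurd hij (by decide)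
  · exact h
  · exact absurd hij (by decide)
  · exact absurd hij (by decide)

lemma clCross_iff {π : Finpartition (Icc 1 m)} : ClCross π 2 ↔ Cl2 (arcFinset π) := by
  constructor
  · rintro ⟨a, b, ha, hb, hab, harc⟩
    refine ⟨(a 0, b 0), mem_arcFinset.2 (harc 0), (a 1, b 1), mem_arcFinset.2 (harc 1),
      ?_, ?_, ?_⟩
    · exact ha (by decide : (0 : Fin 2) < 1)
    · exact hab 1 0
    · exact hb (by decide : (0 : Fin 2) < 1)
  · rintro ⟨p, hp, q, hq, c1, c2, c3⟩
    have hp' := mem_arcFinset.1 hp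
    have hq' := mem_arcFinset.1 hq
    have bp := isArc_bounds hp'
    have bq := isArc_bounds hq'
    refine ⟨![p.1, q.1], ![p.2, q.2], sm2 (by simp; omega), sm2 (by simp; omega), ?_, ?_⟩
    · intro i j
      fin_cases i <;> fin_cases j <;> simp <;> omega
    · intro i
      fin_cases i <;> simpa using ‹_›
    
lemma isEArc_iff {π : Finpartition (Icc 1 m)} {a b : ℕ} :
    IsEArc π a b ↔ EArcD m (arcFinset π) (a, b) := by
  constructor
  · rintro (h | ⟨rfl, h⟩)
    · exact Or.inl (mem_arcFinset.2 h)
    · have := singleton_mem_iff.1 h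
      exact Or.inr ⟨rfl, this.1, this.2.1, this.2.2⟩
  · rintro (h | ⟨he, h1, h2, hf⟩)
    · exact Or.inl (mem_arcFinset.1 h)
    · simp only at he h1 h2 hf
      exact Or.inr ⟨he.symm ▸ rfl, singleton_mem_iff.2 ⟨h1, h2, hf⟩⟩

lemma enhCross_iff {π : Finpartition (Icc 1 m)} : EnhCross π 2 ↔ En2 m (arcFinset π) := by
  constructor
  · rintro ⟨a, b, ha, hb, hab, harc⟩
    refine ⟨(a 0, b 0), (a 1, b 1), isEArc_iff.1 (harc 0), isEArc_iff.1 (harc 1), ?_, ?_, ?_⟩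
    · exact ha (by decide : (0 : Fin 2) < 1)
    · exact hab 1 0
    · exact hb (by decide : (0 : Fin 2) < 1)
  · rintro ⟨p, q, hp, hq, c1, c2, c3⟩
    have bp : p.1 ≤ p.2 := by
      rcases hp with h | h
      · have := (isArc_bounds (mem_arcFinset.1 h)); omega
      · omega
    have bq : q.1 ≤ q.2 := by
      rcases hq with h | h
      · have := (isArc_bounds (mem_arcFinset.1 h)); omega
      · omega
    refine ⟨![p.1, q.1], ![p.2, q.2], sm2 (by simp; omega), sm2 (by simp; omega), ?_, ?_⟩
    · intro i j
      fin_cases i <;> fin_cases j <;> simp <;> omega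
    · intro i
      fin_cases i
      · simpa using isEArc_iff.2 (by simpa using hp)
      · simpa using isEArc_iff.2 (by simpa using hq)


lemma sameBlock_transfer {π π' : Finpartition (Icc 1 m)} (h : arcFinset π = arcFinset π') :
    ∀ y x, x ≤ y → (∃ B ∈ π.parts, x ∈ B ∧ y ∈ B) → (∃ B ∈ π'.parts, x ∈ B ∧ y ∈ B) := by
  intro y
  induction y using Nat.strong_induction_on with
  | _ y ih =>
    rintro x hxy ⟨B, hB, hxB, hyB⟩
    rcases eq_or_lt_of_le hxy with rfl | hlt
    · have hxs : x ∈ Icc 1 m := π.le hB hxB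
      exact ⟨π'.part x, π'.part_mem.2 hxs, π'.mem_part hxs, π'.mem_part hxs⟩
    · set T := B.filter (fun z => x ≤ z ∧ z < y) with hT
      have hTne : T.Nonempty := ⟨x, mem_filter.2 ⟨hxB, le_refl x, hlt⟩⟩
      set c := T.max' hTne with hc
      have hcT := T.max'_mem hTne
      rcases mem_filter.1 hcT with ⟨hcB, hxc, hcy⟩
      have harc : IsArc π c y := by
        refine ⟨hcy, B, hB, hcB, hyB, ?_⟩
        intro z hz
        rintro ⟨h1, h2⟩
        have : z ≤ c := T.le_max' z (mem_filter.2 ⟨hz, by omega, h2⟩)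
        omega
      have harc' : IsArc π' c y := by
        have h1 : (c, y) ∈ arcFinset π := mem_arcFinset.2 harc
        rw [h] at h1
        exact mem_arcFinset.1 h1
      obtain ⟨B1, hB1, hxB1, hcB1⟩ := ih c hcy x hxc ⟨B, hB, hxB, hcB⟩
      obtain ⟨-, B2, hB2, hcB2, hyB2, -⟩ := harc'
      have hBe : B1 = B2 := π'.eq_of_mem_parts hB1 hB2 hcB1 hcB2
      exact ⟨B2, hB2, hBe ▸ hxB1, hyB2⟩

lemma parts_sub {π π' : Finpartition (Icc 1 m)} (h : arcFinset π = arcFinset π') :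
    π.parts ⊆ π'.parts := by
  intro B hB
  have hBne : B.Nonempty := Finset.nonempty_iff_ne_empty.2 (π.ne_bot hB)
  obtain ⟨x, hxB⟩ := hBne
  have hxs : x ∈ Icc 1 m := π.le hB hxB
  have goal : B = π'.part x := by
    ext y
    constructor
    · intro hyB
      rcases le_total x y with hxy | hyx
      · obtain ⟨B', hB', hxB', hyB'⟩ := sameBlock_transfer h y x hxy ⟨B, hB, hxB, hyB⟩
        rw [π'.part_eq_of_mem hB' hxB']
        exact hyB'
      · obtain ⟨B', hB', hyB', hxB'⟩ := sameBlock_transfer h x y hyx ⟨B, hB, hyB, hxB⟩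
        rw [π'.part_eq_of_mem hB' hxB']
        exact hyB'
    · intro hy
      have hys : y ∈ Icc 1 m := π'.le (π'.part_mem.2 hxs) hy
      rcases le_total x y with hxy | hyx
      · obtain ⟨B', hB', hxB', hyB'⟩ := sameBlock_transfer h.symm y x hxy
          ⟨π'.part x, π'.part_mem.2 hxs, π'.mem_part hxs, hy⟩
        have : B' = B := π.eq_of_mem_parts hB' hB hxB' hxB
        exact this ▸ hyB'
      · obtain ⟨B', hB', hyB', hxB'⟩ := sameBlock_transfer h.symm x y hyx
          ⟨π'.part x, π'.part_mem.2 hxs, hy, π'.mem_part hxs⟩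
        have : B' = B := π.eq_of_mem_parts hB' hB hxB' hxB
        exact this ▸ hyB'
  rw [goal]
  exact π'.part_mem.2 hxs

lemma arcFinset_injective {π π' : Finpartition (Icc 1 m)}
    (h : arcFinset π = arcFinset π') : π = π' := by
  apply Finpartition.ext
  exact Finset.Subset.antisymm (parts_sub h) (parts_sub h.symm)


lemma Icc_succ_eq : Icc 1 (m+1) = Icc 1 m ⊔ {m+1} := by
  ext z
  simp only [mem_Icc, Finset.sup_eq_union, mem_union, mem_singleton]
  omega

def addSing (π : Finpartition (Icc 1 m)) : Finpartition (Icc 1 (m+1)) :=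
  π.extend (b := {m+1}) (by simp) (by
      simp only [Finset.disjoint_singleton_right, mem_Icc]; omega)
    Icc_succ_eq.symm

lemma addSing_parts (π : Finpartition (Icc 1 m)) :
    (addSing π).parts = insert {m+1} π.parts := rfl

lemma isArc_addSing {π : Finpartition (Icc 1 m)} {u v : ℕ} :
    IsArc (addSing π) u v ↔ IsArc π u v := by
  constructor
  · rintro ⟨huv, B, hB, huB, hvB, hbet⟩
    rw [addSing_parts, mem_insert] at hB
    rcases hB with rfl | hB
    · rw [mem_singleton] at huB hvB
      omega
    · exact ⟨huv, B, hB, huB, hvB, hbet⟩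
  · rintro ⟨huv, B, hB, huB, hvB, hbet⟩
    exact ⟨huv, B, by rw [addSing_parts]; exact mem_insert_of_mem hB, huB, hvB, hbet⟩

def insInto (π : Finpartition (Icc 1 m)) (a : ℕ) (ha : a ∈ Icc 1 m) :
    Finpartition (Icc 1 (m+1)) where
  parts := insert (insert (m+1) (π.part a)) ((π.parts).erase (π.part a))
  supIndep := by
    rw [Finset.supIndep_iff_pairwiseDisjoint]
    have hm1 : ∀ O ∈ π.parts, (m+1) ∉ O := by
      intro O hO hmem
      have := π.le hO hmem
      rw [mem_Icc] at this
      omega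
    intro u hu v hv huv
    rw [coe_insert, Set.mem_insert_iff] at hu hv
    rcases hu with rfl | hu <;> rcases hv with rfl | hv
    · exact absurd rfl huv
    · have hv' := Finset.mem_of_mem_erase (Finset.mem_coe.1 hv)
      have hvne := Finset.ne_of_mem_erase (Finset.mem_coe.1 hv)
      show Disjoint (insert (m+1) (π.part a)) v
      rw [Finset.disjoint_insert_left]
      exact ⟨hm1 v hv', π.disjoint (Finset.mem_coe.2 (π.part_mem.2 ha)) (Finset.mem_coe.2 hv')
        (fun hcon => hvne hcon.symm)⟩
    · have hu' := Finset.mem_of_mem_erase (Finset.mem_coe.1 hu)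
      have hune := Finset.ne_of_mem_erase (Finset.mem_coe.1 hu)
      show Disjoint u (insert (m+1) (π.part a))
      rw [Finset.disjoint_insert_right]
      exact ⟨hm1 u hu', π.disjoint (Finset.mem_coe.2 hu') (Finset.mem_coe.2 (π.part_mem.2 ha))
        hune⟩
    · exact π.disjoint (Finset.mem_coe.2 (Finset.mem_of_mem_erase (Finset.mem_coe.1 hu)))
        (Finset.mem_coe.2 (Finset.mem_of_mem_erase (Finset.mem_coe.1 hv))) huv
  sup_parts := by
    have h1 : π.parts = insert (π.part a) ((π.parts).erase (π.part a)) :=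
      (Finset.insert_erase (π.part_mem.2 ha)).symm
    have h2 := π.sup_parts
    rw [h1, Finset.sup_insert] at h2
    rw [Finset.sup_insert]
    simp only [id_eq] at h2 ⊢
    rw [Finset.sup_eq_union] at h2 ⊢
    rw [Icc_succ_eq]
    rw [Finset.sup_eq_union]
    ext z
    have hz2 : z ∈ π.part a ∪ (π.parts.erase (π.part a)).sup id ↔ z ∈ Icc 1 m := by rw [h2]
    simp only [mem_insert, mem_union, mem_singleton] at hz2 ⊢
    tauto
  bot_notMem := by
    rw [Finset.mem_insert]
    rintro (h | h)
    · have : (m+1) ∈ (⊥ : Finset ℕ) := h ▸ Finset.mem_insert_self _ _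
      simp at this
    · exact π.bot_notMem (Finset.mem_of_mem_erase h)


lemma isArc_insInto {π : Finpartition (Icc 1 m)} {a : ℕ} (ha : a ∈ Icc 1 m)
    (hmax : ∀ z ∈ π.part a, z ≤ a) {u v : ℕ} :
    IsArc (insInto π a ha) u v ↔ (IsArc π u v ∨ (u = a ∧ v = m+1)) := by
  have haIcc := mem_Icc.1 ha
  have hBa_le : ∀ z ∈ π.part a, z ≤ m := by
    intro z hz
    have := π.le (π.part_mem.2 ha) hz
    rw [mem_Icc] at this
    omega
  constructor
  · rintro ⟨huv, B, hB, huB, hvB, hbet⟩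
    rw [show (insInto π a ha).parts
        = insert (insert (m+1) (π.part a)) ((π.parts).erase (π.part a)) from rfl,
      mem_insert] at hB
    rcases hB with rfl | hB
    · rw [mem_insert] at huB hvB
      rcases huB with rfl | huB
      · rcases hvB with rfl | hvB
        · omega
        · have := hBa_le v hvB; omega
      · rcases hvB with rfl | hvB
        · right
          refine ⟨?_, rfl⟩
          by_contra hne
          have hua := hmax u huB
          exact hbet a (mem_insert_of_mem (π.mem_part ha)) ⟨by omega, by omega⟩
        · left
          refine ⟨huv, π.part a, π.part_mem.2 ha, huB, hvB, ?_⟩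
          intro z hz
          exact hbet z (mem_insert_of_mem hz)
    · exact Or.inl ⟨huv, B, Finset.mem_of_mem_erase hB, huB, hvB, hbet⟩
  · rintro (⟨huv, B, hB, huB, hvB, hbet⟩ | ⟨rfl, rfl⟩)
    · by_cases hBa : B = π.part a
      · subst hBa
        refine ⟨huv, insert (m+1) (π.part a), mem_insert_self _ _,
          mem_insert_of_mem huB, mem_insert_of_mem hvB, ?_⟩
        intro z hz
        rw [mem_insert] at hz
        rcases hz with rfl | hz
        · have := hBa_le v hvB
          rintro ⟨h1, h2⟩
          omega
        · exact hbet z hz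
      · refine ⟨huv, B, ?_, huB, hvB, hbet⟩
        exact mem_insert_of_mem (Finset.mem_erase_of_ne_of_mem hBa hB)
    · refine ⟨by omega, insert (m+1) (π.part u), mem_insert_self _ _,
        mem_insert_of_mem (π.mem_part ha), mem_insert_self _ _, ?_⟩
      intro z hz
      rw [mem_insert] at hz
      rcases hz with rfl | hz
      · rintro ⟨h1, h2⟩; omega
      · have := hmax z hz
        rintro ⟨h1, h2⟩; omega

lemma next_arc {π : Finpartition (Icc 1 m)} {B : Finset ℕ} (hB : B ∈ π.parts) {x z : ℕ}
    (hx : x ∈ B) (hz : z ∈ B) (hxz : x < z) : ∃ u, IsArc π x u ∧ u ≤ z := by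
  set T := B.filter (fun y => x < y) with hT
  have hTne : T.Nonempty := ⟨z, mem_filter.2 ⟨hz, hxz⟩⟩
  set u := T.min' hTne with hu
  have huT := T.min'_mem hTne
  rcases mem_filter.1 huT with ⟨huB, hxu⟩
  refine ⟨u, ⟨hxu, B, hB, hx, huB, ?_⟩, T.min'_le z (mem_filter.2 ⟨hz, hxz⟩)⟩
  intro y hy
  rintro ⟨h1, h2⟩
  have : u ≤ y := T.min'_le y (mem_filter.2 ⟨hy, h1⟩)
  omega

def build : (m : ℕ) → Finset (ℕ × ℕ) → Finpartition (Icc 1 m)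
  | 0, _ => (Finpartition.empty (Finset ℕ)).copy (by rw [Finset.Icc_eq_empty (by omega)]; rfl)
  | (m+1), A =>
    if h : ∃ p ∈ A, p.2 = m+1 then
      if ha : h.choose.1 ∈ Icc 1 m then
        insInto (build m (A.filter (fun p => p.2 ≤ m))) h.choose.1 ha
      else addSing (build m (A.filter (fun p => p.2 ≤ m)))
    else addSing (build m (A.filter (fun p => p.2 ≤ m)))

lemma build_succ (m : ℕ) (A : Finset (ℕ × ℕ)) : build (m+1) A =
    (if h : ∃ p ∈ A, p.2 = m+1 then
      if ha : h.choose.1 ∈ Icc 1 m then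
        insInto (build m (A.filter (fun p => p.2 ≤ m))) h.choose.1 ha
      else addSing (build m (A.filter (fun p => p.2 ≤ m)))
    else addSing (build m (A.filter (fun p => p.2 ≤ m)))) := rfl

lemma build_arcs : ∀ (m : ℕ) (A : Finset (ℕ × ℕ)), Diag m A → arcFinset (build m A) = A := by
  intro m
  induction m with
  | zero =>
    intro A hA
    ext p
    simp only [mem_arcFinset]
    constructor
    · intro h
      have := isArc_bounds h
      exact absurd this (by omega)
    · intro h
      exact absurd (hA.1 p h) (by omega)
  | succ m ih =>
    intro A hA
    obtain ⟨hb, hl, hr⟩ := hA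
    have hA' : Diag m (A.filter (fun p => p.2 ≤ m)) := by
      refine ⟨?_, ?_, ?_⟩
      · intro p hp
        have h1 := hb p (mem_filter.1 hp).1
        have h2 := (mem_filter.1 hp).2
        omega
      · intro p hp q hq he
        exact hl p (mem_filter.1 hp).1 q (mem_filter.1 hq).1 he
      · intro p hp q hq he
        exact hr p (mem_filter.1 hp).1 q (mem_filter.1 hq).1 he
    have IH := ih _ hA'
    rw [build_succ]
    by_cases h : ∃ p ∈ A, p.2 = m+1
    · rw [dif_pos h]
      obtain ⟨hcA, hc2⟩ := h.choose_spec
      have hcb := hb _ hcA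
      have ha : h.choose.1 ∈ Icc 1 m := mem_Icc.2 ⟨by omega, by omega⟩
      rw [dif_pos ha]
      have hmax : ∀ z ∈ (build m (A.filter (fun p => p.2 ≤ m))).part h.choose.1,
          z ≤ h.choose.1 := by
        intro z hz
        by_contra hcon
        push_neg at hcon
        obtain ⟨u, hu, huz⟩ := next_arc ((build m (A.filter (fun p => p.2 ≤ m))).part_mem.2 ha)
          ((build m (A.filter (fun p => p.2 ≤ m))).mem_part ha) hz hcon
        have hmem : (h.choose.1, u) ∈ arcFinset (build m (A.filter (fun p => p.2 ≤ m))) :=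
          mem_arcFinset.2 hu
        rw [IH] at hmem
        have h2 := (mem_filter.1 hmem).2
        have he := hl _ (mem_filter.1 hmem).1 _ hcA rfl
        have := congrArg Prod.snd he
        simp only at this
        omega
      ext p
      rw [mem_arcFinset, isArc_insInto ha hmax]
      constructor
      · rintro (harc | ⟨e1, e2⟩)
        · have hmem : p ∈ arcFinset (build m (A.filter (fun p => p.2 ≤ m))) :=
            mem_arcFinset.2 harc
          rw [IH] at hmem
          exact (mem_filter.1 hmem).1
        · have : p = h.choose := Prod.ext e1 (by rw [e2, hc2])
          rw [this]; exact hcA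
      · intro hp
        have hpb := hb p hp
        rcases Nat.lt_or_ge p.2 (m+1) with hlt | hge
        · left
          have hmem : p ∈ A.filter (fun p => p.2 ≤ m) := mem_filter.2 ⟨hp, by omega⟩
          rw [← IH] at hmem
          exact mem_arcFinset.1 hmem
        · right
          have he2 : p.2 = m+1 := by omega
          have hpe : p = h.choose := hr p hp _ hcA (by rw [he2, hc2])
          exact ⟨by rw [hpe], he2⟩
    · rw [dif_neg h]
      have hAeq : A.filter (fun p => p.2 ≤ m) = A := by
        apply Finset.filter_true_of_mem
        intro p hp
        have := hb p hp
        rcases Nat.lt_or_ge p.2 (m+1) with hlt | hge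
        · omega
        · exact absurd ⟨p, hp, by omega⟩ h
      ext p
      rw [mem_arcFinset, isArc_addSing, ← mem_arcFinset, IH, hAeq]

lemma card_NC (k : ℕ) :
    Nat.card {π : Finpartition (Icc 1 k) // ¬ ClCross π 2} = Nn k := by
  have e : {π : Finpartition (Icc 1 k) // ¬ ClCross π 2} ≃ {A // A ∈ NCset k} := by
    refine Equiv.ofBijective (fun π => ⟨arcFinset π.1,
      mem_NCset.2 ⟨diag_arcFinset _, fun hc => π.2 (clCross_iff.2 hc)⟩⟩) ⟨?_, ?_⟩
    · intro π π' hpp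
      simp only [Subtype.mk.injEq] at hpp
      exact Subtype.ext (arcFinset_injective hpp)
    · rintro ⟨A, hA⟩
      refine ⟨⟨build k A, ?_⟩, Subtype.ext (build_arcs k A (mem_NCset.1 hA).1)⟩
      intro hc
      exact (mem_NCset.1 hA).2 (build_arcs k A (mem_NCset.1 hA).1 ▸ clCross_iff.1 hc)
  rw [Nat.card_congr e]
  exact Nat.card_eq_finsetCard (NCset k)

lemma card_E (k : ℕ) :
    Nat.card {π : Finpartition (Icc 1 k) // ¬ EnhCross π 2} = Mm k := by
  have e : {π : Finpartition (Icc 1 k) // ¬ EnhCross π 2} ≃ {A // A ∈ Eset k} := by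
    refine Equiv.ofBijective (fun π => ⟨arcFinset π.1,
      mem_Eset.2 ⟨diag_arcFinset _, fun hc => π.2 (enhCross_iff.2 hc)⟩⟩) ⟨?_, ?_⟩
    · intro π π' hpp
      simp only [Subtype.mk.injEq] at hpp
      exact Subtype.ext (arcFinset_injective hpp)
    · rintro ⟨A, hA⟩
      refine ⟨⟨build k A, ?_⟩, Subtype.ext (build_arcs k A (mem_Eset.1 hA).1)⟩
      intro hc
      exact (mem_Eset.1 hA).2 (build_arcs k A (mem_Eset.1 hA).1 ▸ enhCross_iff.1 hc)
  rw [Nat.card_congr e]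
  exact Nat.card_eq_finsetCard (Eset k)

end

end Stmt5

theorem stmt5 (n : ℕ) :
    Nat.card {π : Finpartition (Finset.Icc 1 (n+1)) // ¬ ClCross π 2} =
      ∑ i ∈ Finset.range (n+1), n.choose i *
        Nat.card {π : Finpartition (Finset.Icc 1 i) // ¬ EnhCross π 2} := by
  rw [Stmt5.card_NC (n+1), Stmt5.core n, Stmt5.G]
  apply Finset.sum_congr rfl
  intro i _
  rw [Stmt5.card_E i]
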